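/- Let A be a Banach algebra, a ∈ A an element having a generalized right Drazin inverse x (i.e., ax² = x = xax, a²x = axa, a − axa quasinilpotent), and b ∈ A quasinilpotent with ba = 0. Then a + b has a generalized right Drazin inverse, given by y = x(1 + Σ_{n=1}^∞ xⁿbⁿ). -/

import Mathlib

open Filter Topology

/-- `q` is quasinilpotent: `‖qⁿ‖^{1/n} → 0`. -/
def Quasinilpotent {A : Type*} [NormedRing A] (q : A) : Prop :=
  Tendsto (fun n : ℕ => ‖q ^ n‖ ^ (1 / (n : ℝ))) atTop (𝓝 0)

section Aux
variable {A : Type*} [NormedRing A] [NormedAlgebra ℂ A] [CompleteSpace A]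

theorem quasi_iff_srad (q : A) : Quasinilpotent q ↔ spectralRadius ℂ q = 0 := by
  constructor
  · intro h
    have h2 : Tendsto (fun n : ℕ => ENNReal.ofReal (‖q ^ n‖ ^ (1 / (n:ℝ)))) atTop (𝓝 0) := by
      have := (ENNReal.continuous_ofReal.tendsto 0).comp h
      simpa [Function.comp_def] using this
    exact tendsto_nhds_unique (spectrum.pow_norm_pow_one_div_tendsto_nhds_spectralRadius q) h2
  · intro h
    have h2 := spectrum.pow_norm_pow_one_div_tendsto_nhds_spectralRadius q
    rw [h] at h2
    have h3 : Tendsto (fun n : ℕ => (ENNReal.ofReal (‖q ^ n‖ ^ (1 / (n:ℝ)))).toReal) atTop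
        (𝓝 (ENNReal.toReal 0)) := (ENNReal.continuousAt_toReal (by simp)).tendsto.comp h2
    simpa [Quasinilpotent, one_div, ENNReal.toReal_ofReal (Real.rpow_nonneg (norm_nonneg _) _)]
      using h3

theorem srad_spec_zero {q : A} (h : spectralRadius ℂ q = 0) : spectrum ℂ q ⊆ {0} := by
  intro μ hμ
  have : (‖μ‖₊ : ENNReal) ≤ spectralRadius ℂ q :=
    le_iSup₂ (f := fun k (_ : k ∈ spectrum ℂ q) => (‖k‖₊ : ENNReal)) μ hμ
  rw [h] at this
  simpa using this

theorem srad_of_spec_zero {q : A} (h : spectrum ℂ q ⊆ {0}) : spectralRadius ℂ q = 0 := by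
  apply le_antisymm _ zero_le
  rw [spectralRadius]
  apply iSup₂_le
  intro k hk
  have : k = 0 := h hk
  simp [this]

theorem srad_add {q r : A} (hq : spectralRadius ℂ q = 0) (hr : spectralRadius ℂ r = 0)
    (hrq : r * q = 0) : spectralRadius ℂ (q + r) = 0 := by
  apply srad_of_spec_zero
  intro μ hμ
  by_contra hμ0
  have hμ0 : μ ≠ 0 := hμ0
  have hq' : IsUnit (algebraMap ℂ A μ - q) := by
    by_contra h'
    exact hμ0 (srad_spec_zero hq (spectrum.mem_iff.mpr h'))
  have hr' : IsUnit (algebraMap ℂ A μ - r) := by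
    by_contra h'
    exact hμ0 (srad_spec_zero hr (spectrum.mem_iff.mpr h'))
  have key : (algebraMap ℂ A μ - r) * (algebraMap ℂ A μ - q)
      = algebraMap ℂ A μ * (algebraMap ℂ A μ - (q + r)) := by
    have hc : r * algebraMap ℂ A μ = algebraMap ℂ A μ * r := (Algebra.commutes μ r).symm
    noncomm_ring [hrq, hc]
  have hμu : IsUnit (algebraMap ℂ A μ) := (algebraMap ℂ A).isUnit_map (Ne.isUnit hμ0)
  have hprod : IsUnit (algebraMap ℂ A μ * (algebraMap ℂ A μ - (q + r))) := by
    rw [← key]; exact hr'.mul hq'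
  have : IsUnit (algebraMap ℂ A μ - (q + r)) := by
    rcases hμu with ⟨u, hu⟩
    rw [← hu] at hprod ⊢
    exact (Units.isUnit_units_mul u _).mp hprod
  exact (spectrum.mem_iff.mp hμ) this

theorem quasi_mul {b c : A} (hb : Quasinilpotent b) (hbc : b * c = b) :
    Quasinilpotent (c * b) := by
  rw [quasi_iff_srad] at hb ⊢
  apply srad_of_spec_zero
  intro μ hμ
  by_contra hμ0
  have : μ ∈ spectrum ℂ (c * b) \ {0} := ⟨hμ, hμ0⟩
  rw [spectrum.nonzero_mul_comm, hbc] at this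
  exact this.2 (srad_spec_zero hb this.1)

theorem quasi_ev {b : A} (hb : Quasinilpotent b)
    {ε : ℝ} (hε : 0 < ε) : ∀ᶠ n in atTop, ‖b ^ n‖ ≤ ε ^ n := by
  filter_upwards [hb.eventually (gt_mem_nhds hε), eventually_ge_atTop 1] with n hn hn1
  have hne : (n : ℝ) ≠ 0 := by positivity
  have key : ‖b ^ n‖ = (‖b ^ n‖ ^ (1 / (n : ℝ))) ^ n := by
    rw [← Real.rpow_natCast (‖b ^ n‖ ^ (1 / (n:ℝ))) n, ← Real.rpow_mul (norm_nonneg _),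
      one_div, inv_mul_cancel₀ hne, Real.rpow_one]
  rw [key]
  exact pow_le_pow_left₀ (Real.rpow_nonneg (norm_nonneg _) _) hn.le n

theorem summable_xb (x : A) {b : A}
    (hb : Quasinilpotent b) : Summable (fun n : ℕ => x ^ (n + 1) * b ^ (n + 1)) := by
  set ε : ℝ := 1 / (2 * (‖x‖ + 1)) with hεdef
  have hx1 : (0:ℝ) < ‖x‖ + 1 := by positivity
  have hε : 0 < ε := by positivity
  apply Summable.of_norm_bounded_eventually_nat (g := fun n => (1/2 : ℝ) ^ n)
    (summable_geometric_of_lt_one (by norm_num) (by norm_num))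
  obtain ⟨N, hN⟩ := eventually_atTop.mp (quasi_ev hb hε)
  filter_upwards [eventually_ge_atTop N] with n hn
  have hbn : ‖b ^ (n+1)‖ ≤ ε ^ (n+1) := hN (n+1) (by omega)
  calc ‖x ^ (n+1) * b ^ (n+1)‖ ≤ ‖x ^ (n+1)‖ * ‖b ^ (n+1)‖ := norm_mul_le _ _
    _ ≤ ‖x‖ ^ (n+1) * ε ^ (n+1) := by
        exact mul_le_mul (norm_pow_le' x (by omega)) hbn (norm_nonneg _) (by positivity)
    _ ≤ (‖x‖ + 1) ^ (n+1) * ε ^ (n+1) := by gcongr; linarith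
    _ = ((‖x‖ + 1) * ε) ^ (n+1) := by rw [mul_pow]
    _ = (1/2 : ℝ) ^ (n+1) := by
        congr 1
        rw [hεdef]
        field_simp
    _ ≤ (1/2 : ℝ) ^ n := pow_le_pow_of_le_one (by norm_num) (by norm_num) (by omega)

end Aux

/-- If `x` is a generalized right Drazin inverse of `a`, `b` is
quasinilpotent and `ba = 0`, then `y = x(1 + Σ_{n≥1} xⁿbⁿ)` is a generalized right
Drazin inverse of `a + b`. -/
theorem grd_perturbation
    {A : Type*} [NormedRing A] [NormedAlgebra ℂ A] [CompleteSpace A]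
    (a x b : A)
    (h1 : a * x ^ 2 = x) (h2 : x * a * x = x) (h3 : a ^ 2 * x = a * x * a)
    (h4 : Quasinilpotent (a - a * x * a))
    (hb : Quasinilpotent b) (hba : b * a = 0) :
    (a + b) * (x * (1 + ∑' n : ℕ, x ^ (n + 1) * b ^ (n + 1))) ^ 2 =
        x * (1 + ∑' n : ℕ, x ^ (n + 1) * b ^ (n + 1)) ∧
      (x * (1 + ∑' n : ℕ, x ^ (n + 1) * b ^ (n + 1))) * (a + b) *
          (x * (1 + ∑' n : ℕ, x ^ (n + 1) * b ^ (n + 1))) =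
        x * (1 + ∑' n : ℕ, x ^ (n + 1) * b ^ (n + 1)) ∧
      (a + b) ^ 2 * (x * (1 + ∑' n : ℕ, x ^ (n + 1) * b ^ (n + 1))) =
        (a + b) * (x * (1 + ∑' n : ℕ, x ^ (n + 1) * b ^ (n + 1))) * (a + b) ∧
      Quasinilpotent
        ((a + b) - (a + b) * (x * (1 + ∑' n : ℕ, x ^ (n + 1) * b ^ (n + 1))) * (a + b)) := by
  have hS : Summable (fun n : ℕ => x ^ (n + 1) * b ^ (n + 1)) := summable_xb x hb
  set S := ∑' n : ℕ, x ^ (n + 1) * b ^ (n + 1) with hSdef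
  -- basic identities
  have hbx : b * x = 0 := by
    have hx : x = a * x ^ 2 := h1.symm
    rw [hx, ← mul_assoc, hba, zero_mul]
  have Gba : ∀ c : A, b * (a * c) = 0 := fun c => by rw [← mul_assoc, hba, zero_mul]
  have Gbx : ∀ c : A, b * (x * c) = 0 := fun c => by rw [← mul_assoc, hbx, zero_mul]
  have hbS : b * S = 0 := by
    rw [hSdef, ← hS.tsum_mul_left b]
    simp [mul_assoc, pow_succ', Gbx]
  have GbS : ∀ c : A, b * (S * c) = 0 := fun c => by rw [← mul_assoc, hbS, zero_mul]
  have hSx : S * x = 0 := by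
    rw [hSdef, ← hS.tsum_mul_right x]
    simp [mul_assoc, pow_succ, hbx]
  have GSx : ∀ c : A, S * (x * c) = 0 := fun c => by rw [← mul_assoc, hSx, zero_mul]
  have hSa : S * a = 0 := by
    rw [hSdef, ← hS.tsum_mul_right a]
    simp [mul_assoc, pow_succ, hba]
  have GSa : ∀ c : A, S * (a * c) = 0 := fun c => by rw [← mul_assoc, hSa, zero_mul]
  have hSS : S * S = 0 := by
    nth_rewrite 1 [hSdef]
    rw [← hS.tsum_mul_right S]
    simp [mul_assoc, pow_succ, hbS]
  have GSS : ∀ c : A, S * (S * c) = 0 := fun c => by rw [← mul_assoc, hSS, zero_mul]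
  have hax : ∀ n : ℕ, a * x ^ (n + 1 + 1) = x ^ (n + 1) := fun n => by
    rw [show n + 1 + 1 = 2 + n by omega, pow_add, ← mul_assoc, h1, ← pow_succ']
  have haxS : a * (x * S) = S := by
    rw [hSdef, ← hS.tsum_mul_left x, ← (hS.mul_left x).tsum_mul_left a]
    exact tsum_congr fun n => by
      rw [← mul_assoc, ← mul_assoc, mul_assoc a x _, ← pow_succ', hax n]
  have haS : a * S = a * (x * b) + S * b := by
    rw [hSdef, ← hS.tsum_mul_left a, Summable.tsum_eq_zero_add (hS.mul_left a)]
    congr 1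
    · simp [mul_assoc]
    · rw [← hS.tsum_mul_right b]
      exact tsum_congr fun n => by
        rw [← mul_assoc, hax n, mul_assoc, ← pow_succ]
  -- generalized forms for simp
  have h1' : a * (x * x) = x := by rw [← pow_two]; exact h1
  have G1 : ∀ c : A, a * (x * (x * c)) = x * c := fun c => by
    rw [← mul_assoc, ← mul_assoc, mul_assoc a x x, h1']
  have h2' : x * (a * x) = x := by rw [← mul_assoc]; exact h2
  have G2 : ∀ c : A, x * (a * (x * c)) = x * c := fun c => by
    rw [← mul_assoc, ← mul_assoc, mul_assoc x a x, h2']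
  have GaxS : ∀ c : A, a * (x * (S * c)) = S * c := fun c => by
    rw [← mul_assoc, ← mul_assoc, mul_assoc a x S, haxS]
  have h3' : a * (a * x) = a * (x * a) := by
    rw [← mul_assoc a a x, ← pow_two, h3, mul_assoc]
  have GaS : ∀ c : A, a * (S * c) = a * (x * (b * c)) + S * (b * c) := fun c => by
    rw [← mul_assoc, haS, add_mul, mul_assoc, mul_assoc, mul_assoc]
  refine ⟨?_, ?_, ?_, ?_⟩
  · simp only [pow_two, mul_add, add_mul, mul_one, one_mul, mul_assoc,
      hba, hbx, hbS, hSx, hSa, hSS, Gba, Gbx, GbS, GSx, GSa, GSS, G1, G2, GaxS, GaS, h1', h2',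
      h3', haxS, haS, add_zero, zero_add, mul_zero, zero_mul]
  · simp only [pow_two, mul_add, add_mul, mul_one, one_mul, mul_assoc,
      hba, hbx, hbS, hSx, hSa, hSS, Gba, Gbx, GbS, GSx, GSa, GSS, G1, G2, GaxS, GaS, h1', h2',
      h3', haxS, haS, add_zero, zero_add, mul_zero, zero_mul]
  · simp only [pow_two, mul_add, add_mul, mul_one, one_mul, mul_assoc,
      hba, hbx, hbS, hSx, hSa, hSS, Gba, Gbx, GbS, GSx, GSa, GSS, G1, G2, GaxS, GaS, h1', h2',
      h3', haxS, haS, add_zero, zero_add, mul_zero, zero_mul]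
    try abel
  · -- quasinilpotent part
    set q : A := a - a * x * a with hq
    set c : A := 1 - a * x - S with hc
    have hd : (a + b) - (a + b) * (x * (1 + S)) * (a + b) = q + c * b := by
      have e1 : (a + b) * (x * (1 + S)) = a * x + S := by
        simp only [mul_add, add_mul, mul_one, one_mul, mul_assoc, hbx, Gbx, haxS,
          add_zero, zero_add, mul_zero, zero_mul]
      rw [e1]
      simp only [hc, hq, mul_add, add_mul, sub_mul, mul_one, one_mul, mul_assoc,
        hba, hbx, hbS, hSx, hSa, hSS, Gba, Gbx, GbS, GSx, GSa, GSS, add_zero, zero_add,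
        mul_zero, zero_mul]
      abel
    rw [hd]
    have hbc : b * c = b := by
      rw [hc, mul_sub, mul_sub, mul_one, ← mul_assoc, hba, zero_mul, hbS, sub_zero, sub_zero]
    have hcb : Quasinilpotent (c * b) := quasi_mul hb hbc
    have hq4 : Quasinilpotent q := h4
    have hrq : (c * b) * q = 0 := by
      have hbq : b * q = 0 := by
        rw [hq, mul_sub, hba, ← mul_assoc, ← mul_assoc, hba, zero_mul, zero_mul, sub_zero]
      rw [mul_assoc, hbq, mul_zero]
    rw [quasi_iff_srad] at hcb hq4 ⊢
    exact srad_add hq4 hcb hrq
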